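/- For every n ≥ 16 there exists an (n+1)-vertex graph G with two-color Ramsey number r(G) > (1/3)·n·log₂ n, and a vertex v of G such that the graph H obtained by deleting v has Ramsey number r(H) = n. -/

import Mathlib

open Finset

/-- A two-coloring `col` of the edges of `K_N` contains a monochromatic copy of `G` in color `c`. -/
def HasMonoCopy {V : Type*} {N : ℕ} (G : SimpleGraph V) (col : Sym2 (Fin N) → Bool)
    (c : Bool) : Prop :=
  ∃ f : V → Fin N, Function.Injective f ∧ ∀ u v : V, G.Adj u v → col s(f u, f v) = c

/-- The two-color Ramsey number of a graph `G`. -/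
noncomputable def ramsey {V : Type*} (G : SimpleGraph V) : ℕ :=
  sInf {N | ∀ col : Sym2 (Fin N) → Bool, ∃ c : Bool, HasMonoCopy G col c}

/-- `q`-coloring version of containing a monochromatic copy. -/
def HasMonoCopyMulti {V : Type*} {N q : ℕ} (G : SimpleGraph V) (col : Sym2 (Fin N) → Fin q)
    (c : Fin q) : Prop :=
  ∃ f : V → Fin N, Function.Injective f ∧ ∀ u v : V, G.Adj u v → col s(f u, f v) = c

/-- The `q`-color Ramsey number of a graph `G`. -/
noncomputable def ramseyMulti {V : Type*} (G : SimpleGraph V) (q : ℕ) : ℕ :=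
  sInf {N | ∀ col : Sym2 (Fin N) → Fin q, ∃ c : Fin q, HasMonoCopyMulti G col c}

/-- The `n`-vertex graph consisting of a clique `K_k` together with `n - k` isolated vertices. -/
def Hgraph (k n : ℕ) : SimpleGraph (Fin n) where
  Adj u v := u ≠ v ∧ (u : ℕ) < k ∧ (v : ℕ) < k
  symm := by constructor; rintro u v ⟨h1, h2, h3⟩; exact ⟨h1.symm, h3, h2⟩
  loopless := by constructor; rintro u ⟨h, -⟩; exact h rfl

/-- The `(n+1)`-vertex graph obtained from `Hgraph k n` by adding an apex vertex (the vertex `n`)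
adjacent to all other vertices. -/
def Ggraph (k n : ℕ) : SimpleGraph (Fin (n + 1)) where
  Adj u v := u ≠ v ∧ ((u : ℕ) = n ∨ (v : ℕ) = n ∨ ((u : ℕ) < k ∧ (v : ℕ) < k))
  symm := by constructor; rintro u v ⟨h1, h2⟩; exact ⟨h1.symm, by tauto⟩
  loopless := by constructor; rintro u ⟨h, -⟩; exact h rfl

/-- The disjoint union of `n / k` copies of `K_k` (blocks of `k` consecutive vertices). -/
def Hgraph' (k n : ℕ) : SimpleGraph (Fin n) where
  Adj u v := u ≠ v ∧ (u : ℕ) / k = (v : ℕ) / k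
  symm := by constructor; rintro u v ⟨h1, h2⟩; exact ⟨h1.symm, h2.symm⟩
  loopless := by constructor; rintro u ⟨h, -⟩; exact h rfl

/-- `G` is `d`-degenerate: every nonempty set of vertices contains a vertex with at most `d`
neighbors inside the set. -/
def Degenerate {V : Type*} (G : SimpleGraph V) (d : ℕ) : Prop :=
  ∀ s : Set V, s.Nonempty → ∃ v ∈ s, {u ∈ s | G.Adj v u}.ncard ≤ d

/-- The degeneracy of `G`: the least `d` such that `G` is `d`-degenerate. -/
noncomputable def degeneracy {V : Type*} (G : SimpleGraph V) : ℕ :=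
  sInf {d | Degenerate G d}

/-- The number of edges of `K_N` receiving color `c` under the coloring `col`. -/
noncomputable def colorEdgeCount {N : ℕ} (col : Sym2 (Fin N) → Bool) (c : Bool) : ℕ :=
  {e : Sym2 (Fin N) | ¬ e.IsDiag ∧ col e = c}.ncard

/-- The set of vertices joined to `v` by an edge of color `c`. -/
def colorNbr {N : ℕ} (col : Sym2 (Fin N) → Bool) (c : Bool) (v : Fin N) : Finset (Fin N) :=
  Finset.univ.filter fun u => u ≠ v ∧ col s(v, u) = c

lemma choose_le_two_pow (n k : ℕ) : n.choose k ≤ 2 ^ n := by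
  rcases le_or_gt k n with h | h
  · calc n.choose k ≤ ∑ m ∈ range (n+1), n.choose m :=
        Finset.single_le_sum (fun i _ => Nat.zero_le _) (mem_range.mpr (by omega))
    _ = 2 ^ n := Nat.sum_range_choose n
  · simp [Nat.choose_eq_zero_of_lt h]
lemma insert_mono_step {N : ℕ} (col : Sym2 (Fin N) → Bool) (c : Bool) (v : Fin N)
    (A : Finset (Fin N)) (hv : ∀ u ∈ A, col s(v, u) = c)
    (hA : ∀ u ∈ A, ∀ w ∈ A, u ≠ w → col s(u, w) = c) :
    ∀ u ∈ insert v A, ∀ w ∈ insert v A, u ≠ w → col s(u, w) = c := by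
  intro u hu w hw huw
  rcases Finset.mem_insert.mp hu with h1 | h1
  · rcases Finset.mem_insert.mp hw with h2 | h2
    · exact absurd (h1.trans h2.symm) huw
    · rw [h1]; exact hv w h2
  · rcases Finset.mem_insert.mp hw with h2 | h2
    · rw [h2, Sym2.eq_swap]; exact hv u h1
    · exact hA u h1 w h2 huw
lemma clique_lemma : ∀ (m s t N : ℕ), s + t ≤ m → ∀ (col : Sym2 (Fin N) → Bool) (S : Finset (Fin N)),
    (s + t).choose s ≤ S.card →
    (∃ A ⊆ S, A.card = s ∧ ∀ u ∈ A, ∀ v ∈ A, u ≠ v → col s(u, v) = true) ∨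
    (∃ A ⊆ S, A.card = t ∧ ∀ u ∈ A, ∀ v ∈ A, u ≠ v → col s(u, v) = false) := by
  intro m
  induction m with
  | zero =>
    intro s t N h col S hS
    have hs : s = 0 := by omega
    left; exact ⟨∅, empty_subset _, by simp [hs], by simp⟩
  | succ m ih =>
    intro s t N hst col S hS
    rcases Nat.eq_zero_or_pos s with hs | hs
    · left; exact ⟨∅, empty_subset _, by simp [hs], by simp⟩
    rcases Nat.eq_zero_or_pos t with ht | ht
    · right; exact ⟨∅, empty_subset _, by simp [ht], by simp⟩
    obtain ⟨s', rfl⟩ : ∃ s', s = s' + 1 := ⟨s - 1, by omega⟩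
    obtain ⟨t', rfl⟩ : ∃ t', t = t' + 1 := ⟨t - 1, by omega⟩
    have hS1 : 0 < S.card := lt_of_lt_of_le (Nat.choose_pos (by omega)) hS
    obtain ⟨v, hv⟩ := Finset.card_pos.mp hS1
    set T := (S.erase v).filter (fun u => col s(v, u) = true) with hTdef
    set F := (S.erase v).filter (fun u => ¬ col s(v, u) = true) with hFdef
    have hTS : T ⊆ S := (Finset.filter_subset _ _).trans (Finset.erase_subset _ _)
    have hFS : F ⊆ S := (Finset.filter_subset _ _).trans (Finset.erase_subset _ _)
    have hTF : T.card + F.card = S.card - 1 := by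
      rw [hTdef, hFdef, Finset.card_filter_add_card_filter_not,
        Finset.card_erase_of_mem hv]
    have pascal : (s' + 1 + (t' + 1)).choose (s' + 1)
        = (s' + (t' + 1)).choose s' + (s' + 1 + t').choose (s' + 1) := by
      have h1 : s' + 1 + (t' + 1) = (s' + t' + 1) + 1 := by ring
      have h2 : s' + (t' + 1) = s' + t' + 1 := by ring
      have h3 : s' + 1 + t' = s' + t' + 1 := by ring
      rw [h1, h2, h3, Nat.choose_succ_succ]
    have key : (s' + (t' + 1)).choose s' ≤ T.card ∨ (s' + 1 + t').choose (s' + 1) ≤ F.card := by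
      by_contra hcon
      push_neg at hcon
      omega
    rcases key with hk | hk
    · rcases ih s' (t' + 1) N (by omega) col T hk with ⟨A, hAT, hAc, hmono⟩ | ⟨A, hAT, hAc, hmono⟩
      · left
        have hvA : v ∉ A := fun h => (Finset.notMem_erase v S)
          (Finset.mem_of_mem_filter v (hAT h))
        refine ⟨insert v A, Finset.insert_subset hv (hAT.trans hTS), ?_, ?_⟩
        · rw [Finset.card_insert_of_notMem hvA, hAc]
        · exact insert_mono_step col true v A
            (fun u hu => (Finset.mem_filter.mp (hAT hu)).2) hmono
      · right; exact ⟨A, hAT.trans hTS, hAc, hmono⟩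
    · rcases ih (s' + 1) t' N (by omega) col F hk with ⟨A, hAT, hAc, hmono⟩ | ⟨A, hAT, hAc, hmono⟩
      · left; exact ⟨A, hAT.trans hFS, hAc, hmono⟩
      · right
        have hvA : v ∉ A := fun h => (Finset.notMem_erase v S)
          (Finset.mem_of_mem_filter v (hAT h))
        refine ⟨insert v A, Finset.insert_subset hv (hAT.trans hFS), ?_, ?_⟩
        · rw [Finset.card_insert_of_notMem hvA, hAc]
        · refine insert_mono_step col false v A (fun u hu => ?_) hmono
          have := (Finset.mem_filter.mp (hAT hu)).2
          simpa using this
lemma ramsey_mem_mono {V : Type*} (G : SimpleGraph V) {N M : ℕ} (h : N ≤ M)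
    (hN : N ∈ {N | ∀ col : Sym2 (Fin N) → Bool, ∃ c : Bool, HasMonoCopy G col c}) :
    M ∈ {N | ∀ col : Sym2 (Fin N) → Bool, ∃ c : Bool, HasMonoCopy G col c} := by
  intro col
  obtain ⟨c, f, hf, hcol⟩ := hN (fun e => col (e.map (Fin.castLE h)))
  refine ⟨c, (Fin.castLE h) ∘ f, (Fin.castLE_injective h).comp hf, fun u v huv => ?_⟩
  have := hcol u v huv
  simpa [Sym2.map_pair_eq] using this

-- any member is at least the number of vertices
lemma ramsey_mem_card_le {V : Type*} [Fintype V] (G : SimpleGraph V) {N : ℕ}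
    (hN : N ∈ {N | ∀ col : Sym2 (Fin N) → Bool, ∃ c : Bool, HasMonoCopy G col c}) :
    Fintype.card V ≤ N := by
  obtain ⟨c, f, hf, -⟩ := hN (fun _ => true)
  simpa using Fintype.card_le_of_injective f hf
lemma copy_of_clique {m N : ℕ} (G : SimpleGraph (Fin m)) (col : Sym2 (Fin N) → Bool) (c : Bool)
    (A : Finset (Fin N)) (hA : A.card = m)
    (hmono : ∀ u ∈ A, ∀ v ∈ A, u ≠ v → col s(u, v) = c) : HasMonoCopy G col c := by
  refine ⟨fun i => (A.orderIsoOfFin hA i : Fin N), ?_, ?_⟩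
  · intro i j hij
    exact (A.orderIsoOfFin hA).injective (Subtype.val_injective hij)
  · intro u v huv
    have hne : (A.orderIsoOfFin hA u : Fin N) ≠ (A.orderIsoOfFin hA v : Fin N) := by
      intro h
      exact G.ne_of_adj huv ((A.orderIsoOfFin hA).injective (Subtype.val_injective h))
    exact hmono _ (A.orderIsoOfFin hA u).2 _ (A.orderIsoOfFin hA v).2 hne
lemma hgraph_copy {k n : ℕ} (hk : k ≤ n) (col : Sym2 (Fin n) → Bool) (c : Bool)
    (A : Finset (Fin n)) (hA : A.card = k)
    (hmono : ∀ u ∈ A, ∀ v ∈ A, u ≠ v → col s(u, v) = c) :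
    HasMonoCopy (Hgraph k n) col c := by
  have hB : (Finset.univ \ A).card = n - k := by
    rw [Finset.card_sdiff_of_subset (Finset.subset_univ A), hA, Finset.card_univ, Fintype.card_fin]
  set a : Fin k → Fin n := fun j => (A.orderIsoOfFin hA j : Fin n) with ha
  set b : Fin (n - k) → Fin n := fun j => ((Finset.univ \ A).orderIsoOfFin hB j : Fin n) with hb
  have haA : ∀ j, a j ∈ A := fun j => (A.orderIsoOfFin hA j).2
  have hbA : ∀ j, b j ∉ A := fun j => by
    have := ((Finset.univ \ A).orderIsoOfFin hB j).2
    exact (Finset.mem_sdiff.mp this).2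
  have hainj : Function.Injective a := fun i j h =>
    (A.orderIsoOfFin hA).injective (Subtype.val_injective h)
  have hbinj : Function.Injective b := fun i j h =>
    ((Finset.univ \ A).orderIsoOfFin hB).injective (Subtype.val_injective h)
  refine ⟨fun i => if h : (i : ℕ) < k then a ⟨i, h⟩ else b ⟨(i : ℕ) - k, by omega⟩, ?_, ?_⟩
  · intro i j hij
    by_cases hi : (i : ℕ) < k <;> by_cases hj : (j : ℕ) < k <;> simp [hi, hj] at hij
    · have := hainj hij; apply Fin.ext; simpa [Fin.ext_iff] using this
    · exact absurd (hij ▸ haA ⟨i, hi⟩) (hbA _)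
    · exact absurd (hij.symm ▸ haA ⟨j, hj⟩) (hbA _)
    · have := hbinj hij
      have hi' := i.isLt
      apply Fin.ext
      have : (i : ℕ) - k = (j : ℕ) - k := by simpa [Fin.ext_iff] using this
      omega
  · rintro u v ⟨huv, hu, hv⟩
    simp only [dif_pos hu, dif_pos hv]
    refine hmono _ (haA _) _ (haA _) fun h => huv ?_
    have := hainj h
    apply Fin.ext; simpa [Fin.ext_iff] using this
lemma block_coloring (k n : ℕ) (hk : 2 ≤ k) (hkn : k < n) :
    ∃ col : Sym2 (Fin (k * n)) → Bool, ∀ c : Bool, ¬ HasMonoCopy (Ggraph k n) col c := by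
  have hn : 0 < n := by omega
  refine ⟨Sym2.lift ⟨fun u v => decide ((u : ℕ) / n = (v : ℕ) / n), by
    intro u v; simp [eq_comm]⟩, ?_⟩
  rintro c ⟨f, hf, hcol⟩
  have hcolval : ∀ u v : Fin (n + 1), (Ggraph k n).Adj u v →
      (decide (((f u : ℕ)) / n = ((f v : ℕ)) / n)) = c := fun u v h => hcol u v h
  set apex : Fin (n + 1) := ⟨n, by omega⟩ with hapex
  cases c with
  | true =>
    have hq : ∀ u : Fin (n + 1), ((f u : ℕ)) / n = ((f apex : ℕ)) / n := by
      intro u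
      by_cases hu : u = apex
      · rw [hu]
      · have hadj : (Ggraph k n).Adj apex u := ⟨fun h => hu h.symm, Or.inl rfl⟩
        have := hcolval apex u hadj
        simp only [decide_eq_true_eq] at this
        omega
    set g : Fin (n + 1) → Fin n := fun u => ⟨(f u : ℕ) % n, Nat.mod_lt _ hn⟩ with hg
    have hginj : Function.Injective g := by
      intro u v huv
      apply hf
      apply Fin.ext
      have h3 : (f u : ℕ) % n = (f v : ℕ) % n := by simpa [Fin.ext_iff, hg] using huv
      have e1 : (f u : ℕ) = n * ((f apex : ℕ) / n) + (f u : ℕ) % n := by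
        rw [← hq u]; exact (Nat.div_add_mod _ _).symm
      have e2 : (f v : ℕ) = n * ((f apex : ℕ) / n) + (f v : ℕ) % n := by
        rw [← hq v]; exact (Nat.div_add_mod _ _).symm
      omega
    have := Fintype.card_le_of_injective g hginj
    simp at this
  | false =>
    set w : Fin (k + 1) → Fin (n + 1) := fun i =>
      if h : (i : ℕ) = k then apex else ⟨i, by omega⟩ with hw
    have hwadj : ∀ i j : Fin (k + 1), i ≠ j → (Ggraph k n).Adj (w i) (w j) := by
      intro i j hij
      have hij' : (i : ℕ) ≠ (j : ℕ) := fun h => hij (Fin.ext h)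
      have hi' : (i : ℕ) < k + 1 := i.isLt
      have hj' : (j : ℕ) < k + 1 := j.isLt
      by_cases hi : (i : ℕ) = k
      · have hwi : w i = apex := by rw [hw]; exact dif_pos hi
        by_cases hj : (j : ℕ) = k
        · exact absurd (hi.trans hj.symm) hij'
        · have hwj : w j = ⟨(j : ℕ), by omega⟩ := by rw [hw]; exact dif_neg hj
          rw [hwi, hwj]
          refine ⟨fun h => ?_, Or.inl rfl⟩
          have := congrArg Fin.val h
          simp only [hapex] at this
          omega
      · have hwi : w i = ⟨(i : ℕ), by omega⟩ := by rw [hw]; exact dif_neg hi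
        by_cases hj : (j : ℕ) = k
        · have hwj : w j = apex := by rw [hw]; exact dif_pos hj
          rw [hwi, hwj]
          refine ⟨fun h => ?_, Or.inr (Or.inl rfl)⟩
          have := congrArg Fin.val h
          simp only [hapex] at this
          omega
        · have hwj : w j = ⟨(j : ℕ), by omega⟩ := by rw [hw]; exact dif_neg hj
          rw [hwi, hwj]
          exact ⟨fun h => hij' (by simpa [Fin.ext_iff] using h),
            Or.inr (Or.inr ⟨by simp only [Fin.val_mk]; omega, by simp only [Fin.val_mk]; omega⟩)⟩
    set g : Fin (k + 1) → Fin k := fun i => ⟨(f (w i) : ℕ) / n,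
      (Nat.div_lt_iff_lt_mul hn).mpr (f (w i)).isLt⟩ with hg
    have hginj : Function.Injective g := by
      intro i j hij
      by_contra hne
      have := hcolval (w i) (w j) (hwadj i j hne)
      simp only [decide_eq_false_iff_not] at this
      exact this (by simpa [Fin.ext_iff, hg] using hij)
    have := Fintype.card_le_of_injective g hginj
    simp at this
lemma copy_comp {V W : Type*} {N : ℕ} (G : SimpleGraph V) (G' : SimpleGraph W) (e : W → V)
    (he : Function.Injective e) (hadj : ∀ u v, G'.Adj u v → G.Adj (e u) (e v))
    (col : Sym2 (Fin N) → Bool) (c : Bool) :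
    HasMonoCopy G col c → HasMonoCopy G' col c :=
  fun ⟨f, hf, h⟩ => ⟨f ∘ e, hf.comp he, fun u v huv => h _ _ (hadj u v huv)⟩

theorem exists_vertex_deletion_superconstant (n : ℕ) (hn : 16 ≤ n) :
    ∃ (G : SimpleGraph (Fin (n + 1))) (v : Fin (n + 1)),
      (1 / 3 : ℝ) * n * Real.logb 2 n < ramsey G ∧
      ramsey (G.induce {u | u ≠ v}) = n := by
  set m := Nat.log 2 n with hmdef
  set k := m / 2 with hkdef
  have hm4 : 4 ≤ m := (Nat.le_log_iff_pow_le (by norm_num) (by omega)).mpr (by norm_num; omega)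
  have hk2 : 2 ≤ k := by omega
  have h2k : 2 ^ (2 * k) ≤ n := le_trans
    (Nat.pow_le_pow_right (by norm_num) (by omega : 2 * k ≤ m))
    (Nat.pow_log_le_self 2 (by omega))
  have hkpow : k < 2 ^ (2 * k) := lt_of_lt_of_le (Nat.lt_two_pow_self (n := k))
    (Nat.pow_le_pow_right (by norm_num) (by omega))
  have hkn : k < n := lt_of_lt_of_le hkpow h2k
  have hchoose : (k + k).choose k ≤ n := le_trans (choose_le_two_pow (k + k) k)
    (by rw [show k + k = 2 * k by ring]; exact h2k)
  set apex : Fin (n + 1) := ⟨n, by omega⟩ with hapex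
  refine ⟨Ggraph k n, apex, ?_, ?_⟩
  · -- lower bound
    set SG := {N | ∀ col : Sym2 (Fin N) → Bool, ∃ c : Bool, HasMonoCopy (Ggraph k n) col c}
      with hSG
    have hne : SG.Nonempty := by
      refine ⟨(n + 1 + (n + 1)).choose (n + 1), fun col => ?_⟩
      rcases clique_lemma (n + 1 + (n + 1)) (n + 1) (n + 1) _ le_rfl col Finset.univ
          (by rw [Finset.card_univ, Fintype.card_fin]) with
        ⟨A, -, hAc, hmono⟩ | ⟨A, -, hAc, hmono⟩
      · exact ⟨true, copy_of_clique _ col true A hAc hmono⟩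
      · exact ⟨false, copy_of_clique _ col false A hAc hmono⟩
    have hlb : ∀ N ∈ SG, k * n < N := by
      intro N hN
      by_contra hle
      push_neg at hle
      obtain ⟨col, hcol⟩ := block_coloring k n hk2 hkn
      obtain ⟨c, hc⟩ := ramsey_mem_mono (Ggraph k n) hle hN col
      exact hcol c hc
    have hram : k * n < ramsey (Ggraph k n) := hlb _ (Nat.sInf_mem hne)
    have hL : Real.logb 2 n < (m : ℝ) + 1 := by
      have h1 : (n : ℝ) < (2 : ℝ) ^ (m + 1) := by
        exact_mod_cast Nat.lt_pow_succ_log_self (by norm_num) n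
      calc Real.logb 2 n < Real.logb 2 ((2 : ℝ) ^ (m + 1)) :=
            Real.logb_lt_logb (by norm_num) (by positivity) h1
        _ = (m : ℝ) + 1 := by
            rw [Real.logb_pow, Real.logb_self_eq_one (by norm_num)]
            push_cast; ring
    have hL3 : Real.logb 2 n < 3 * (k : ℝ) := lt_of_lt_of_le hL (by
      have : (m : ℝ) + 1 ≤ 2 * (k : ℝ) + 2 := by exact_mod_cast (by omega : m + 1 ≤ 2 * k + 2)
      have h2 : 2 * (k : ℝ) + 2 ≤ 3 * (k : ℝ) := by
        have : (2 : ℝ) ≤ (k : ℝ) := by exact_mod_cast hk2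
        linarith
      linarith)
    have hn0 : (0 : ℝ) < (n : ℝ) := by positivity
    calc (1 / 3 : ℝ) * n * Real.logb 2 n < (1 / 3 : ℝ) * n * (3 * k) := by
          apply mul_lt_mul_of_pos_left hL3; positivity
      _ = ((k * n : ℕ) : ℝ) := by push_cast; ring
      _ < (ramsey (Ggraph k n) : ℝ) := by exact_mod_cast hram
  · -- ramsey of the induced graph is n
    set G' := (Ggraph k n).induce {u : Fin (n + 1) | u ≠ apex} with hG'
    set e : {u : Fin (n + 1) // u ∈ {u : Fin (n + 1) | u ≠ apex}} → Fin n := fun u =>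
      ⟨(u.1 : ℕ), by
        have h1 : (u.1 : ℕ) < n + 1 := u.1.isLt
        have h2 : (u.1 : ℕ) ≠ n := fun h => u.2 (Fin.ext h)
        omega⟩ with he
    have heinj : Function.Injective e := by
      intro u v huv
      apply Subtype.ext; apply Fin.ext
      simpa [he, Fin.ext_iff] using huv
    have headj : ∀ u v, G'.Adj u v → (Hgraph k n).Adj (e u) (e v) := by
      rintro u v ⟨huv, hcase⟩
      have hu : (u.1 : ℕ) ≠ n := fun h => u.2 (Fin.ext h)
      have hv : (v.1 : ℕ) ≠ n := fun h => v.2 (Fin.ext h)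
      rcases hcase with h | h | ⟨h1, h2⟩
      · exact absurd h hu
      · exact absurd h hv
      · exact ⟨fun h => huv (congrArg _ (heinj h)), by simpa [he] using h1,
          by simpa [he] using h2⟩
    have hmem : n ∈ {N | ∀ col : Sym2 (Fin N) → Bool, ∃ c : Bool, HasMonoCopy G' col c} := by
      intro col
      rcases clique_lemma (k + k) k k n le_rfl col Finset.univ
          (by rw [Finset.card_univ, Fintype.card_fin]; exact hchoose) with
        ⟨A, -, hAc, hmono⟩ | ⟨A, -, hAc, hmono⟩
      · exact ⟨true, copy_comp _ _ e heinj headj col true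
          (hgraph_copy (by omega) col true A hAc hmono)⟩
      · exact ⟨false, copy_comp _ _ e heinj headj col false
          (hgraph_copy (by omega) col false A hAc hmono)⟩
    have hcard : Fintype.card {u : Fin (n + 1) // u ∈ {u : Fin (n + 1) | u ≠ apex}} = n := by
      have h1 : Fintype.card {u : Fin (n + 1) // u ∈ {u : Fin (n + 1) | u ≠ apex}}
          = Fintype.card {u : Fin (n + 1) // ¬ u = apex} :=
        Fintype.card_congr (Equiv.subtypeEquivRight (fun u => Iff.rfl))
      rw [h1, Fintype.card_subtype_compl, Fintype.card_subtype_eq, Fintype.card_fin]; omega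
    refine le_antisymm (Nat.sInf_le hmem) (le_csInf ⟨n, hmem⟩ fun b hb => ?_)
    have := ramsey_mem_card_le G' hb
    rwa [hcard] at this
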